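/- Let n ≥ 1 and let Y, A_1, …, A_{n−1} ∈ M_n(ℕ) satisfy Y + A_1·Y·A_1 + A_2·Y·A_2 + ⋯ + A_{n−1}·Y·A_{n−1} = I_n and A_1²·A_2²·⋯·A_{n−1}² = I_n. Then there exists an index i with 1 ≤ i ≤ n such that Y = E_{i,i}. -/

import Mathlib

open Matrix Finset

theorem stmt9 (n : ℕ) (hn : 1 ≤ n)
    (Y : Matrix (Fin n) (Fin n) ℕ) (A : Fin (n - 1) → Matrix (Fin n) (Fin n) ℕ)
    (h1 : Y + ∑ j : Fin (n - 1), A j * Y * A j = 1)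
    (h2 : (List.ofFn fun j : Fin (n - 1) => (A j) ^ 2).prod = 1) :
    ∃ i : Fin n, Y = Matrix.single i i 1 := by
  -- integer versions of A j
  set B : Fin (n-1) → Matrix (Fin n) (Fin n) ℤ :=
    fun j => (A j).map (Nat.cast : ℕ → ℤ) with hBdef
  have hB2 : (List.ofFn fun j => (B j) ^ 2).prod = 1 := by
    have := congrArg (fun M => (Nat.castRingHom ℤ).mapMatrix M) h2
    simp only [map_list_prod, List.map_ofFn, Function.comp_def, map_pow, _root_.map_one] at this
    simpa [hBdef, RingHom.mapMatrix_apply] using this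
  have hdet : ∀ j, (B j).det ≠ 0 := by
    intro j hd
    have h3 : ((List.ofFn fun j => B j ^ 2).map Matrix.det).prod = 1 := by
      rw [← Matrix.coe_detMonoidHom, ← map_list_prod, hB2, _root_.map_one]
    have hdvd : ((B j) ^ 2).det ∣ (1 : ℤ) := by
      rw [← h3]
      exact List.dvd_prod (List.mem_map.mpr ⟨(B j)^2, by rw [List.mem_ofFn]; exact ⟨j, rfl⟩, rfl⟩)
    rw [Matrix.det_pow, hd] at hdvd
    exact absurd hdvd (by norm_num)
  -- every row and column of A j has a nonzero entry
  have hrow : ∀ j p, (1:ℕ) ≤ ∑ q, A j p q := by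
    intro j p
    rw [Nat.one_le_iff_ne_zero]
    intro h0
    refine hdet j (Matrix.det_eq_zero_of_row_eq_zero p fun q => ?_)
    have := Finset.sum_eq_zero_iff.mp h0 q (mem_univ q)
    simp [hBdef, this]
  have hcol : ∀ j p, (1:ℕ) ≤ ∑ q, A j q p := by
    intro j p
    rw [Nat.one_le_iff_ne_zero]
    intro h0
    refine hdet j (Matrix.det_eq_zero_of_column_eq_zero p fun q => ?_)
    have := Finset.sum_eq_zero_iff.mp h0 q (mem_univ q)
    simp [hBdef, this]
  -- total entry sum
  set s : Matrix (Fin n) (Fin n) ℕ → ℕ := fun M => ∑ p, ∑ q, M p q with hsdef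
  have hexpand : ∀ j, s (A j * Y * A j)
      = ∑ b, ∑ a, (∑ p, A j p a) * Y a b * (∑ q, A j b q) := by
    intro j
    calc s (A j * Y * A j)
        = ∑ p, ∑ b, (A j * Y) p b * (∑ q, A j b q) := by
          refine Finset.sum_congr rfl fun p _ => ?_
          calc ∑ q, (A j * Y * A j) p q = ∑ q, ∑ b, (A j * Y) p b * A j b q := by
                refine Finset.sum_congr rfl fun q _ => ?_
                rw [Matrix.mul_apply]
            _ = ∑ b, ∑ q, (A j * Y) p b * A j b q := Finset.sum_comm
            _ = ∑ b, (A j * Y) p b * (∑ q, A j b q) := by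
                refine Finset.sum_congr rfl fun b _ => (Finset.mul_sum _ _ _).symm
      _ = ∑ b, (∑ p, (A j * Y) p b) * (∑ q, A j b q) := by
          rw [Finset.sum_comm]
          exact Finset.sum_congr rfl fun b _ => (Finset.sum_mul _ _ _).symm
      _ = ∑ b, (∑ a, (∑ p, A j p a) * Y a b) * (∑ q, A j b q) := by
          refine Finset.sum_congr rfl fun b _ => ?_
          congr 1
          calc ∑ p, (A j * Y) p b = ∑ p, ∑ a, A j p a * Y a b := by
                refine Finset.sum_congr rfl fun p _ => ?_
                rw [Matrix.mul_apply]
            _ = ∑ a, ∑ p, A j p a * Y a b := Finset.sum_comm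
            _ = ∑ a, (∑ p, A j p a) * Y a b := by
                refine Finset.sum_congr rfl fun a _ => (Finset.sum_mul _ _ _).symm
      _ = ∑ b, ∑ a, (∑ p, A j p a) * Y a b * (∑ q, A j b q) := by
          refine Finset.sum_congr rfl fun b _ => Finset.sum_mul _ _ _
  have hmono : ∀ j, s Y ≤ s (A j * Y * A j) := by
    intro j
    rw [hexpand j]
    have hsY : s Y = ∑ b, ∑ a, Y a b := Finset.sum_comm
    rw [hsY]
    refine Finset.sum_le_sum fun b _ => Finset.sum_le_sum fun a _ => ?_
    calc Y a b = 1 * Y a b * 1 := by ring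
      _ ≤ (∑ p, A j p a) * Y a b * (∑ q, A j b q) :=
          Nat.mul_le_mul (Nat.mul_le_mul (hcol j a) le_rfl) (hrow j b)
  have hs1 : s (1 : Matrix (Fin n) (Fin n) ℕ) = n := by
    simp [hsdef, Matrix.one_apply]
  have hadd : s Y + ∑ j, s (A j * Y * A j) = n := by
    have h := congrArg s h1
    rw [hs1] at h
    have hsplit : s (Y + ∑ j, A j * Y * A j) = s Y + ∑ j, s (A j * Y * A j) := by
      simp only [hsdef, Matrix.add_apply, Matrix.sum_apply, Finset.sum_add_distrib]
      congr 1
      first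
      | exact Finset.sum_comm.trans (Finset.sum_congr rfl fun p _ => Finset.sum_comm)
      | exact (Finset.sum_comm.trans (Finset.sum_congr rfl fun p _ => Finset.sum_comm)).symm
    rw [← hsplit]
    exact h
  have hsY1 : s Y ≤ 1 := by
    have hge : (n - 1) * s Y ≤ ∑ j, s (A j * Y * A j) := by
      calc (n-1) * s Y = ∑ _j : Fin (n-1), s Y := by
            simp [Finset.sum_const, Finset.card_univ]
        _ ≤ _ := Finset.sum_le_sum fun j _ => hmono j
    have hnn : n * s Y ≤ n := by
      calc n * s Y = (1 + (n-1)) * s Y := by congr 1; omega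
        _ = s Y + (n-1) * s Y := by ring
        _ ≤ s Y + ∑ j, s (A j * Y * A j) := Nat.add_le_add_left hge _
        _ = n := hadd
    exact Nat.le_of_mul_le_mul_left (by simpa [Nat.mul_comm] using hnn) (by omega)
  have hsYne : s Y ≠ 0 := by
    intro h0
    have hY0 : Y = 0 := by
      ext a b
      exact Finset.sum_eq_zero_iff.mp
        (Finset.sum_eq_zero_iff.mp h0 a (mem_univ a)) b (mem_univ b)
    rw [hY0] at h1
    simp only [Matrix.mul_zero, Matrix.zero_mul, Finset.sum_const, smul_zero, add_zero,
      zero_add] at h1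
    have := congrFun (congrFun h1 ⟨0, hn⟩) ⟨0, hn⟩
    simp [Matrix.one_apply] at this
  have hsY : s Y = 1 := le_antisymm hsY1 (Nat.one_le_iff_ne_zero.mpr hsYne)
  -- off-diagonal entries of Y vanish
  have hdiag : ∀ p q, p ≠ q → Y p q = 0 := by
    intro p q hpq
    have := congrFun (congrFun h1 p) q
    simp only [Matrix.add_apply, Matrix.sum_apply, Matrix.one_apply, if_neg hpq] at this
    omega
  -- find the nonzero entry
  have hex : ∃ a b, Y a b ≠ 0 := by
    by_contra h
    push_neg at h
    exact hsYne (by simp [hsdef, h])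
  obtain ⟨a, b, hab⟩ := hex
  have hba : a = b := by
    by_contra h
    exact hab (hdiag a b h)
  subst hba
  refine ⟨a, ?_⟩
  have h5 : Y a a ≤ ∑ q, Y a q :=
    Finset.single_le_sum (fun q _ => Nat.zero_le _) (mem_univ a)
  have hYaa : Y a a = 1 := by
    have hle : Y a a ≤ s Y := by
      calc Y a a ≤ ∑ q, Y a q := h5
        _ ≤ s Y := Finset.single_le_sum (f := fun p => ∑ q, Y p q)
              (fun p _ => Nat.zero_le _) (mem_univ a)
    omega
  have hrest : ∀ p, p ≠ a → ∀ q, Y p q = 0 := by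
    intro p hpa q
    have h4 : (∑ q, Y a q) + ∑ x ∈ univ.erase a, ∑ q, Y x q = s Y :=
      Finset.add_sum_erase _ (fun p => ∑ q, Y p q) (mem_univ a)
    have h6 : (∑ q, Y p q) ≤ ∑ x ∈ univ.erase a, ∑ q, Y x q :=
      Finset.single_le_sum (f := fun x => ∑ q, Y x q)
        (fun x _ => Nat.zero_le _) (Finset.mem_erase.mpr ⟨hpa, mem_univ p⟩)
    have h7 : Y p q ≤ ∑ q, Y p q :=
      Finset.single_le_sum (fun q _ => Nat.zero_le _) (mem_univ q)
    omega
  ext p q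
  rcases eq_or_ne p a with rfl | hpa
  · rcases eq_or_ne q p with rfl | hqp
    · simpa [Matrix.single_apply_same] using hYaa
    · rw [hdiag p q (Ne.symm hqp)]
      simp [Matrix.single, Ne.symm hqp]
  · rw [hrest p hpa q]
    simp [Matrix.single, Ne.symm hpa]
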